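/- For the CHSH expression I = ⟨A₀B₀⟩ + ⟨A₀B₁⟩ + ⟨A₁B₀⟩ − ⟨A₁B₁⟩ where A₀,A₁,B₀,B₁ are ±1-valued observables (Hermitian operators with A_i² = 1, B_j² = 1, [A_i ⊗ 1, 1 ⊗ B_j] = 0 via tensor structure) measured on a bipartite quantum state ρ, if the observed value equals I_obs ∈ [2, 2√2], then for either outcome direction, |⟨A₀⟩| ≤ √(8 − I_obs²)/2, where ⟨A₀⟩ = Tr[(A₀ ⊗ 1)ρ]. -/

import Mathlib

open Matrix ComplexOrder Kronecker

private lemma kron_ct {dA dB : ℕ} (X : Matrix (Fin dA) (Fin dA) ℂ)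
    (Y : Matrix (Fin dB) (Fin dB) ℂ) : (X ⊗ₖ Y)ᴴ = Xᴴ ⊗ₖ Yᴴ := by
  ext ⟨i, j⟩ ⟨k, l⟩
  simp [Matrix.conjTranspose_apply, Matrix.kroneckerMap_apply, star_mul', mul_comm]

private lemma tr_sq_re_nonneg {n : Type*} [Fintype n] [DecidableEq n]
    (Y : Matrix n n ℂ) : 0 ≤ ((Yᴴ * Y).trace).re := by
  have h : (Yᴴ * Y).trace = ∑ j, ∑ i, (starRingEnd ℂ) (Y i j) * Y i j := by
    simp [Matrix.trace, Matrix.diag, Matrix.mul_apply, Matrix.conjTranspose_apply]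
  rw [h, Complex.re_sum]
  refine Finset.sum_nonneg fun j _ => ?_
  rw [Complex.re_sum]
  refine Finset.sum_nonneg fun i _ => ?_
  rw [mul_comm, Complex.mul_conj]
  simp [Complex.normSq_nonneg]

private lemma tr_psd_re_nonneg {n : Type*} [Fintype n] [DecidableEq n]
    (Q ρ : Matrix n n ℂ) (hρ : ρ.PosSemidef) : 0 ≤ (((Qᴴ * Q) * ρ).trace).re := by
  open scoped MatrixOrder in obtain ⟨K, rfl⟩ := CStarAlgebra.nonneg_iff_eq_star_mul_self.mp hρ.nonneg
  rw [Matrix.star_eq_conjTranspose]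
  have h : ((Qᴴ * Q) * (Kᴴ * K)).trace = (((Q * Kᴴ)ᴴ) * (Q * Kᴴ)).trace := by
    rw [Matrix.conjTranspose_mul, Matrix.conjTranspose_conjTranspose]
    rw [show Qᴴ * Q * (Kᴴ * K) = (Qᴴ * (Q * Kᴴ)) * K by
      simp only [Matrix.mul_assoc]]
    rw [Matrix.trace_mul_comm, Matrix.mul_assoc]
  rw [h]
  exact tr_sq_re_nonneg _

/-- The key sum-of-squares identity behind the tilted-CHSH / marginal bound. -/
private lemma sos_key {dA dB : ℕ}
    (a0 a1 : Matrix (Fin dA) (Fin dA) ℂ) (b0 b1 : Matrix (Fin dB) (Fin dB) ℂ)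
    (ha0 : a0 * a0 = 1) (ha1 : a1 * a1 = 1)
    (hb0 : b0 * b0 = 1) (hb1 : b1 * b1 = 1) (s c r : ℂ) :
    ((2*c) • (a0 ⊗ₖ (1 : Matrix (Fin dB) (Fin dB) ℂ)) + (-r) • ((1 : Matrix (Fin dA) (Fin dA) ℂ) ⊗ₖ b0)
      + (-r) • ((1 : Matrix (Fin dA) (Fin dA) ℂ) ⊗ₖ b1) + s • (a0 ⊗ₖ b0) + s • (a0 ⊗ₖ b1)
      + (-s) • (a1 ⊗ₖ b0) + s • (a1 ⊗ₖ b1)) *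
    ((2*c) • (a0 ⊗ₖ (1 : Matrix (Fin dB) (Fin dB) ℂ)) + (-r) • ((1 : Matrix (Fin dA) (Fin dA) ℂ) ⊗ₖ b0)
      + (-r) • ((1 : Matrix (Fin dA) (Fin dA) ℂ) ⊗ₖ b1) + s • (a0 ⊗ₖ b0) + s • (a0 ⊗ₖ b1)
      + (-s) • (a1 ⊗ₖ b0) + s • (a1 ⊗ₖ b1)) +
    ((2*c) • (a1 ⊗ₖ (1 : Matrix (Fin dB) (Fin dB) ℂ)) + (-r) • ((1 : Matrix (Fin dA) (Fin dA) ℂ) ⊗ₖ b0)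
      + r • ((1 : Matrix (Fin dA) (Fin dA) ℂ) ⊗ₖ b1) + s • (a0 ⊗ₖ b0) + (-s) • (a0 ⊗ₖ b1)
      + (-s) • (a1 ⊗ₖ b0) + (-s) • (a1 ⊗ₖ b1)) *
    ((2*c) • (a1 ⊗ₖ (1 : Matrix (Fin dB) (Fin dB) ℂ)) + (-r) • ((1 : Matrix (Fin dA) (Fin dA) ℂ) ⊗ₖ b0)
      + r • ((1 : Matrix (Fin dA) (Fin dA) ℂ) ⊗ₖ b1) + s • (a0 ⊗ₖ b0) + (-s) • (a0 ⊗ₖ b1)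
      + (-s) • (a1 ⊗ₖ b0) + (-s) • (a1 ⊗ₖ b1))
    = (4*r^2 + 8*c^2 + 8*s^2) • ((1 : Matrix (Fin dA) (Fin dA) ℂ) ⊗ₖ (1 : Matrix (Fin dB) (Fin dB) ℂ))
      + (-(8*s*r)) • (a0 ⊗ₖ (1 : Matrix (Fin dB) (Fin dB) ℂ))
      + (-(4*c*r)) • (a0 ⊗ₖ b0) + (-(4*c*r)) • (a0 ⊗ₖ b1)
      + (-(4*c*r)) • (a1 ⊗ₖ b0) + (4*c*r) • (a1 ⊗ₖ b1) := by
  simp only [Matrix.add_mul, Matrix.mul_add, smul_mul_assoc, mul_smul_comm,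
    ← Matrix.mul_kronecker_mul, Matrix.one_mul, Matrix.mul_one, ha0, ha1, hb0, hb1,
    smul_smul]
  match_scalars <;> ring

/-- CHSH bound on a single-party marginal: if the observed CHSH value is
`I_obs ∈ [2, 2√2]`, then `|⟨A₀⟩| ≤ √(8 - I_obs²)/2`. -/
theorem chsh_marginal_bound {dA dB : ℕ}
    (A : Fin 2 → Matrix (Fin dA) (Fin dA) ℂ)
    (B : Fin 2 → Matrix (Fin dB) (Fin dB) ℂ)
    (hA : ∀ i, (A i).IsHermitian) (hA2 : ∀ i, A i * A i = 1)
    (hB : ∀ j, (B j).IsHermitian) (hB2 : ∀ j, B j * B j = 1)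
    (ρ : Matrix (Fin dA × Fin dB) (Fin dA × Fin dB) ℂ)
    (hρ : ρ.PosSemidef) (hρtr : ρ.trace = 1)
    (Iobs : ℝ) (hI : Iobs ∈ Set.Icc 2 (2 * Real.sqrt 2))
    (hobs : ((A 0 ⊗ₖ B 0) * ρ).trace + ((A 0 ⊗ₖ B 1) * ρ).trace
        + ((A 1 ⊗ₖ B 0) * ρ).trace - ((A 1 ⊗ₖ B 1) * ρ).trace = (Iobs : ℂ)) :
    |(((A 0 ⊗ₖ (1 : Matrix (Fin dB) (Fin dB) ℂ)) * ρ).trace).re|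
      ≤ Real.sqrt (8 - Iobs ^ 2) / 2 := by
  set a : ℝ := (((A 0 ⊗ₖ (1 : Matrix (Fin dB) (Fin dB) ℂ)) * ρ).trace).re with ha
  -- the marginal trace (complex)
  set tm : ℂ := ((A 0 ⊗ₖ (1 : Matrix (Fin dB) (Fin dB) ℂ)) * ρ).trace with htm
  -- key scalar bound: for all s, c on the unit circle, c Iobs + 2 s a ≤ 2√2
  have bound : ∀ s c : ℝ, s^2 + c^2 = 1 → c * Iobs + 2 * s * a ≤ 2 * Real.sqrt 2 := by
    intro s c hsc
    set r : ℝ := Real.sqrt 2 with hr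
    set P : Matrix (Fin dA × Fin dB) (Fin dA × Fin dB) ℂ :=
      ((2*(c:ℂ)) • (A 0 ⊗ₖ (1 : Matrix (Fin dB) (Fin dB) ℂ)) + (-(r:ℂ)) • ((1 : Matrix (Fin dA) (Fin dA) ℂ) ⊗ₖ B 0)
      + (-(r:ℂ)) • ((1 : Matrix (Fin dA) (Fin dA) ℂ) ⊗ₖ B 1) + (s:ℂ) • (A 0 ⊗ₖ B 0) + (s:ℂ) • (A 0 ⊗ₖ B 1)
      + (-(s:ℂ)) • (A 1 ⊗ₖ B 0) + (s:ℂ) • (A 1 ⊗ₖ B 1)) with hP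
    set Q : Matrix (Fin dA × Fin dB) (Fin dA × Fin dB) ℂ :=
      ((2*(c:ℂ)) • (A 1 ⊗ₖ (1 : Matrix (Fin dB) (Fin dB) ℂ)) + (-(r:ℂ)) • ((1 : Matrix (Fin dA) (Fin dA) ℂ) ⊗ₖ B 0)
      + (r:ℂ) • ((1 : Matrix (Fin dA) (Fin dA) ℂ) ⊗ₖ B 1) + (s:ℂ) • (A 0 ⊗ₖ B 0) + (-(s:ℂ)) • (A 0 ⊗ₖ B 1)
      + (-(s:ℂ)) • (A 1 ⊗ₖ B 0) + (-(s:ℂ)) • (A 1 ⊗ₖ B 1)) with hQ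
    have hermP : Pᴴ = P := by
      rw [hP]
      simp [Matrix.conjTranspose_add, Matrix.conjTranspose_smul, kron_ct,
        Matrix.conjTranspose_one, (hA 0).eq, (hA 1).eq, (hB 0).eq, (hB 1).eq, Complex.star_def, _root_.map_mul,
        Complex.conj_ofReal]
    have hermQ : Qᴴ = Q := by
      rw [hQ]
      simp [Matrix.conjTranspose_add, Matrix.conjTranspose_smul, kron_ct,
        Matrix.conjTranspose_one, (hA 0).eq, (hA 1).eq, (hB 0).eq, (hB 1).eq, Complex.star_def, _root_.map_mul,
        Complex.conj_ofReal]
    have key := sos_key (A 0) (A 1) (B 0) (B 1) (hA2 0) (hA2 1) (hB2 0) (hB2 1)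
      (s:ℂ) (c:ℂ) (r:ℂ)
    have htr : ((Pᴴ * P) * ρ).trace + ((Qᴴ * Q) * ρ).trace
        = (4*(r:ℂ)^2 + 8*(c:ℂ)^2 + 8*(s:ℂ)^2) - (4*(c:ℂ)*(r:ℂ)) * (Iobs:ℂ)
          - (8*(s:ℂ)*(r:ℂ)) * tm := by
      rw [hermP, hermQ, ← Matrix.trace_add, ← Matrix.add_mul, hP, hQ, key]
      simp only [Matrix.add_mul, smul_mul_assoc, Matrix.trace_add, Matrix.trace_smul,
        Matrix.one_kronecker_one, Matrix.one_mul, smul_eq_mul, hρtr, htm]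
      linear_combination (-(4*(c:ℂ)*(r:ℂ))) * hobs
    have hpos : 0 ≤ (((Pᴴ * P) * ρ).trace + ((Qᴴ * Q) * ρ).trace).re := by
      rw [Complex.add_re]
      have := tr_psd_re_nonneg P ρ hρ
      have := tr_psd_re_nonneg Q ρ hρ
      linarith
    rw [htr] at hpos
    have hre : ((4*(r:ℂ)^2 + 8*(c:ℂ)^2 + 8*(s:ℂ)^2) - (4*(c:ℂ)*(r:ℂ)) * (Iobs:ℂ)
        - (8*(s:ℂ)*(r:ℂ)) * tm).re
        = (4*r^2 + 8*c^2 + 8*s^2) - (4*c*r) * Iobs - (8*s*r) * a := by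
      simp [Complex.sub_re, Complex.mul_re, Complex.add_re, Complex.ofReal_re,
        Complex.ofReal_im, Complex.mul_im, ha, ← Complex.ofReal_pow]
    rw [hre] at hpos
    have hr2 : r^2 = 2 := Real.sq_sqrt (by norm_num)
    have hrpos : 0 < r := Real.sqrt_pos.mpr (by norm_num)
    -- 0 ≤ 16 - 4r(c Iobs + 2 s a)  ⟹  c Iobs + 2 s a ≤ 4/r = 2√2
    have h16 : 4*r^2 + 8*c^2 + 8*s^2 = 16 := by rw [hr2]; nlinarith [hsc]
    rw [h16] at hpos
    have : 4*r*(c * Iobs + 2*s*a) ≤ 16 := by nlinarith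
    have h4r : (0:ℝ) < 4*r := by linarith
    rw [show (2:ℝ) * Real.sqrt 2 = 16 / (4*r) by
      rw [hr]; rw [eq_div_iff (by positivity)]; nlinarith [hr2, hrpos]]
    rw [le_div_iff₀ h4r]
    linarith [this]
  -- instantiate with s = 2a/w, c = Iobs/w, w = √(Iobs² + 4a²)
  have hI2 : (2:ℝ) ≤ Iobs := hI.1
  have hwpos : 0 < Real.sqrt (Iobs^2 + 4*a^2) := by
    apply Real.sqrt_pos.mpr; nlinarith [sq_nonneg a]
  set w : ℝ := Real.sqrt (Iobs^2 + 4*a^2) with hw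
  have hw2 : w^2 = Iobs^2 + 4*a^2 := Real.sq_sqrt (by nlinarith [sq_nonneg a, sq_nonneg Iobs])
  have hsc : (2*a/w)^2 + (Iobs/w)^2 = 1 := by
    field_simp
    nlinarith [hw2]
  have hb := bound (2*a/w) (Iobs/w) hsc
  have hcomb : (Iobs/w) * Iobs + 2 * (2*a/w) * a = w := by
    field_simp
    nlinarith [hw2]
  rw [hcomb] at hb
  -- w ≤ 2√2 ⟹ w² ≤ 8
  have hsqrt2 : Real.sqrt 2 ^ 2 = 2 := Real.sq_sqrt (by norm_num)
  have hw8 : w^2 ≤ 8 := by nlinarith [hwpos, hsqrt2, Real.sqrt_nonneg 2]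
  have hkey : Iobs^2 + 4*a^2 ≤ 8 := by rw [← hw2]; exact hw8
  -- conclude
  have h8 : 0 ≤ 8 - Iobs^2 := by nlinarith [sq_nonneg a]
  have ha2 : a^2 ≤ (8 - Iobs^2)/4 := by linarith
  have := Real.sqrt_le_sqrt ha2
  rw [Real.sqrt_sq_eq_abs] at this
  refine this.trans (le_of_eq ?_)
  rw [show (8 - Iobs^2)/4 = (8 - Iobs^2) * (1/2)^2 by ring,
    Real.sqrt_mul h8, Real.sqrt_sq (by norm_num)]
  ring
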